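/- There exists a real number Y such that for every real y ≥ Y, every real θ with 1 < θ < 2, and every squarefree natural number L ≥ 2 with the property that every prime q dividing L satisfies q ≤ y^θ and every prime r dividing q − 1 satisfies r ≤ y, the exponent of the group (ℤ/Lℤ)ˣ is at most exp(2θy). -/

import Mathlib

open Real Finset


open Finset in
lemma exp_dvd_lcm (L : ℕ) (hL : 2 ≤ L) (hsf : Squarefree L) :
    Monoid.exponent (ZMod L)ˣ ∣ L.primeFactors.lcm (· - 1) := by
  set N := L.primeFactors.lcm (· - 1) with hN
  have hL0 : L ≠ 0 := by omega
  apply Monoid.exponent_dvd_of_forall_pow_eq_one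
  intro u
  have : NeZero L := ⟨hL0⟩
  ext
  push_cast
  -- goal : (u : ZMod L) ^ N = 1
  have key : ∀ q ∈ L.primeFactors, (q : ℕ) ∣ ((u : ZMod L) ^ N - 1).val := by
    intro q hq
    have hqp : q.Prime := Nat.prime_of_mem_primeFactors hq
    have hqd : q ∣ L := Nat.dvd_of_mem_primeFactors hq
    haveI : Fact q.Prime := ⟨hqp⟩
    have hdvd : (q - 1) ∣ N := Finset.dvd_lcm hq
    set f : ZMod L →+* ZMod q := ZMod.castHom hqd (ZMod q)
    have hu : (Units.map (f : ZMod L →* ZMod q) u) ^ N = 1 := by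
      obtain ⟨k, hk⟩ := hdvd
      rw [hk, pow_mul]
      have : (Units.map (f : ZMod L →* ZMod q) u) ^ (q - 1) = 1 := by
        have := ZMod.pow_card_sub_one_eq_one (a := ((Units.map (f : ZMod L →* ZMod q) u : (ZMod q)ˣ) : ZMod q)) (Units.ne_zero _)
        ext
        push_cast
        exact this
      rw [this, one_pow]
    have hfx : f ((u : ZMod L) ^ N) = 1 := by
      have := congrArg (fun v : (ZMod q)ˣ => (v : ZMod q)) hu
      simpa using this
    have : f ((u : ZMod L) ^ N - 1) = 0 := by rw [map_sub, hfx, map_one, sub_self]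
    have hv : ((((u : ZMod L) ^ N - 1).val : ℕ) : ZMod q) = 0 := by
      rw [ZMod.natCast_val]
      rwa [ZMod.castHom_apply] at this
    exact (ZMod.natCast_eq_zero_iff _ _).mp hv
  have hLdvd : L ∣ ((u : ZMod L) ^ N - 1).val := by
    have h := Finset.prod_primes_dvd (((u : ZMod L) ^ N - 1).val)
      (fun p hp => (Nat.prime_of_mem_primeFactors hp).prime) key
    rwa [Nat.prod_primeFactors_of_squarefree hsf] at h
  have : (((((u : ZMod L) ^ N - 1).val : ℕ)) : ZMod L) = 0 :=
    (ZMod.natCast_eq_zero_iff _ _).mpr hLdvd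
  rw [ZMod.natCast_val, ZMod.cast_id] at this
  have := sub_eq_zero.mp this
  simpa using this


lemma flcm_ne_zero (s : Finset ℕ) (f : ℕ → ℕ) (h : ∀ i ∈ s, f i ≠ 0) : s.lcm f ≠ 0 := by
  induction s using Finset.induction_on with
  | empty => simp [Finset.lcm_empty]
  | insert _ _ ha ih =>
    rw [Finset.lcm_insert]
    exact Nat.lcm_ne_zero (h _ (Finset.mem_insert_self _ _))
      (ih fun i hi => h i (Finset.mem_insert_of_mem hi))

lemma flcm_fact (s : Finset ℕ) (f : ℕ → ℕ) (h : ∀ i ∈ s, f i ≠ 0) (r : ℕ)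
    (hr : 0 < (s.lcm f).factorization r) :
    ∃ i ∈ s, r ^ ((s.lcm f).factorization r) ∣ f i := by
  induction s using Finset.induction_on with
  | empty => simp [Finset.lcm_empty] at hr
  | @insert a s ha ih =>
    have hfa : f a ≠ 0 := h _ (Finset.mem_insert_self _ _)
    have hrest : ∀ i ∈ s, f i ≠ 0 := fun i hi => h i (Finset.mem_insert_of_mem hi)
    have hl : s.lcm f ≠ 0 := flcm_ne_zero s f hrest
    rw [Finset.lcm_insert] at hr ⊢
    have hfac : (lcm (f a) (s.lcm f)).factorization
        = (f a).factorization ⊔ (s.lcm f).factorization := Nat.factorization_lcm hfa hl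
    rw [hfac] at hr ⊢
    rw [Finsupp.sup_apply] at hr ⊢
    rcases le_total ((s.lcm f).factorization r) ((f a).factorization r) with hc | hc
    · refine ⟨a, Finset.mem_insert_self _ _, ?_⟩
      rw [sup_eq_left.mpr hc]
      exact Nat.ordProj_dvd _ _
    · rw [sup_eq_right.mpr hc] at hr ⊢
      obtain ⟨i, hi, hd⟩ := ih hrest hr
      exact ⟨i, Finset.mem_insert_of_mem hi, hd⟩



/-- product of distinct primes each ≤ x is at most exp (x * log 4) -/
lemma primes_prod_le (s : Finset ℕ) (x : ℝ) (hx : 1 ≤ x)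
    (h : ∀ r ∈ s, r.Prime ∧ (r:ℝ) ≤ x) :
    (∏ r ∈ s, (r:ℝ)) ≤ Real.exp (x * Real.log 4) := by
  set m := ⌊x⌋₊ with hm
  have hsub : s ⊆ (Finset.range (m+1)).filter Nat.Prime := by
    intro r hr
    obtain ⟨hp, hle⟩ := h r hr
    rw [Finset.mem_filter, Finset.mem_range]
    exact ⟨by have := Nat.le_floor hle; omega, hp⟩
  have hnat : (∏ r ∈ s, r) ≤ primorial m := by
    refine Finset.prod_le_prod_of_subset_of_one_le' hsub ?_
    intro i hi _
    exact Nat.one_le_iff_ne_zero.mpr (Nat.Prime.ne_zero (Finset.mem_filter.mp hi).2)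
  have h4 : primorial m ≤ 4 ^ m := primorial_le_4_pow m
  have hcast : (∏ r ∈ s, (r:ℝ)) ≤ ((4:ℝ)) ^ m := by
    have hR : ((∏ r ∈ s, r : ℕ) : ℝ) ≤ ((4^m : ℕ) : ℝ) := Nat.cast_le.mpr (hnat.trans h4)
    rw [Nat.cast_prod, Nat.cast_pow] at hR
    exact_mod_cast hR
  calc (∏ r ∈ s, (r:ℝ)) ≤ (4:ℝ)^m := hcast
    _ = Real.exp (m * Real.log 4) := by
        rw [← Real.log_pow, Real.exp_log (by positivity)]
    _ ≤ Real.exp (x * Real.log 4) := by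
        apply Real.exp_le_exp.mpr
        have hm' : (m:ℝ) ≤ x := Nat.floor_le (by linarith)
        have : (0:ℝ) ≤ Real.log 4 := Real.log_nonneg (by norm_num)
        nlinarith

lemma root_le {a y θ : ℝ} (k : ℕ) (hk : 0 < k) (ha : 0 ≤ a) (hy : 0 ≤ y)
    (h : a ^ k ≤ y ^ θ) : a ≤ y ^ (θ / k) := by
  have h1 : (a ^ k) ^ ((1:ℝ)/k) ≤ (y ^ θ) ^ ((1:ℝ)/k) :=
    Real.rpow_le_rpow (by positivity) h (by positivity)
  have h2 : (a ^ k) ^ ((1:ℝ)/k) = a := by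
    rw [← Real.rpow_natCast a k, ← Real.rpow_mul ha]
    rw [mul_one_div, div_self (by exact_mod_cast hk.ne')]
    exact Real.rpow_one a
  have h3 : (y ^ θ) ^ ((1:ℝ)/k) = y ^ (θ / k) := by
    rw [← Real.rpow_mul hy, mul_one_div]
  rwa [h2, h3] at h1



lemma real_final (y θ : ℝ) (hy : (240:ℝ)^(4:ℕ) ≤ y) (hθ1 : 1 < θ) (hθ2 : θ < 2) :
    y * Real.log 4 + y ^ (θ/2) * Real.log 4 + y ^ ((2:ℝ)/3) * (2 * Real.log y)
      ≤ 2 * θ * y := by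
  have hy1 : (1:ℝ) ≤ y := le_trans (by norm_num) hy
  have hy0 : (0:ℝ) < y := by linarith
  have hc : Real.log 4 ≤ 1.39 := by
    have : (4:ℝ) = 2^(2:ℕ) := by norm_num
    rw [this, Real.log_pow]
    have := Real.log_two_lt_d9
    push_cast
    nlinarith
  have hc0 : 0 ≤ Real.log 4 := Real.log_nonneg (by norm_num)
  -- y^(1/4) ≥ 240
  have h14 : (240:ℝ) ≤ y ^ ((1:ℝ)/4) := by
    have h240 : ((240:ℝ)^(4:ℕ)) ^ ((1:ℝ)/4) = 240 := by
      rw [← Real.rpow_natCast (240:ℝ) 4, ← Real.rpow_mul (by norm_num)]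
      norm_num
    calc (240:ℝ) = ((240:ℝ)^(4:ℕ)) ^ ((1:ℝ)/4) := h240.symm
      _ ≤ y ^ ((1:ℝ)/4) := Real.rpow_le_rpow (by positivity) hy (by norm_num)
  -- y^(3/4) ≤ y / 240
  have h34 : y ^ ((3:ℝ)/4) ≤ y / 240 := by
    have : y ^ ((3:ℝ)/4) * y ^ ((1:ℝ)/4) = y := by
      rw [← Real.rpow_add hy0]; norm_num
    have h0 : (0:ℝ) < y ^ ((3:ℝ)/4) := Real.rpow_pos_of_pos hy0 _
    rw [div_eq_mul_inv]
    rw [le_div_iff₀ (by norm_num : (0:ℝ) < 240)] at *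
    nlinarith [h14, h0]
  -- log y ≤ 12 * y^(1/12)
  have hlog : Real.log y ≤ 12 * y ^ ((1:ℝ)/12) := by
    have h1 : Real.log (y ^ ((1:ℝ)/12)) = (1/12) * Real.log y := Real.log_rpow hy0 _
    have h2 : Real.log (y ^ ((1:ℝ)/12)) ≤ y ^ ((1:ℝ)/12) - 1 :=
      Real.log_le_sub_one_of_pos (Real.rpow_pos_of_pos hy0 _)
    have h3 : (0:ℝ) < y ^ ((1:ℝ)/12) := Real.rpow_pos_of_pos hy0 _
    nlinarith
  -- third term ≤ 0.1 y
  have hthird : y ^ ((2:ℝ)/3) * (2 * Real.log y) ≤ 0.1 * y := by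
    have hmul : y ^ ((2:ℝ)/3) * y ^ ((1:ℝ)/12) = y ^ ((3:ℝ)/4) := by
      rw [← Real.rpow_add hy0]; norm_num
    have h23 : (0:ℝ) < y ^ ((2:ℝ)/3) := Real.rpow_pos_of_pos hy0 _
    calc y ^ ((2:ℝ)/3) * (2 * Real.log y) ≤ y ^ ((2:ℝ)/3) * (24 * y ^ ((1:ℝ)/12)) := by
          nlinarith
      _ = 24 * y ^ ((3:ℝ)/4) := by rw [← hmul]; ring
      _ ≤ 24 * (y / 240) := by linarith
      _ = 0.1 * y := by ring
  rcases le_total (1.5:ℝ) θ with hθ | hθ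
  · have h1 : y ^ (θ/2) ≤ y := by
      calc y ^ (θ/2) ≤ y ^ (1:ℝ) := Real.rpow_le_rpow_of_exponent_le hy1 (by linarith)
        _ = y := Real.rpow_one y
    have hy2 : y ^ (θ/2) * Real.log 4 ≤ y * Real.log 4 := by nlinarith [Real.rpow_pos_of_pos hy0 (θ/2)]
    nlinarith
  · have h1 : y ^ (θ/2) ≤ y / 240 := by
      calc y ^ (θ/2) ≤ y ^ ((3:ℝ)/4) := Real.rpow_le_rpow_of_exponent_le hy1 (by linarith)
        _ ≤ y / 240 := h34
    have hy2 : y ^ (θ/2) * Real.log 4 ≤ (y/240) * 1.39 := by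
      nlinarith [Real.rpow_pos_of_pos hy0 (θ/2)]
    nlinarith



lemma N_bound (y θ : ℝ) (hy : (240:ℝ)^(4:ℕ) ≤ y) (hθ1 : 1 < θ) (hθ2 : θ < 2)
    (N : ℕ) (hN : N ≠ 0)
    (h : ∀ r ∈ N.primeFactors, (r:ℝ) ≤ y ∧ (r:ℝ) ^ (N.factorization r) ≤ y ^ θ) :
    (N:ℝ) ≤ Real.exp (2 * θ * y) := by
  have hy1 : (1:ℝ) ≤ y := le_trans (by norm_num) hy
  have hy0 : (0:ℝ) < y := by linarith
  set e : ℕ → ℕ := fun r => N.factorization r with he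
  set PF := N.primeFactors with hPF
  -- basic facts
  have hprime : ∀ r ∈ PF, r.Prime := fun r hr => Nat.prime_of_mem_primeFactors hr
  have hepos : ∀ r ∈ PF, 1 ≤ e r := by
    intro r hr
    exact Nat.Prime.factorization_pos_of_dvd (hprime r hr) hN (Nat.dvd_of_mem_primeFactors hr)
  have hr1 : ∀ r ∈ PF, (1:ℝ) ≤ (r:ℝ) := by
    intro r hr; exact_mod_cast (hprime r hr).one_lt.le
  -- N as product
  have hNeq : (N:ℝ) = ∏ r ∈ PF, (r:ℝ) ^ (e r) := by
    conv_lhs => rw [← Nat.factorization_prod_pow_eq_self hN]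
    rw [Nat.prod_factorization_eq_prod_primeFactors]
    push_cast
    rfl
  -- split the product into three
  have hsplit : (N:ℝ) = (∏ r ∈ PF, (r:ℝ)) * (∏ r ∈ PF, (r:ℝ) ^ (min (e r - 1) 1))
      * (∏ r ∈ PF, (r:ℝ) ^ (e r - 2)) := by
    rw [hNeq, ← Finset.prod_mul_distrib, ← Finset.prod_mul_distrib]
    apply Finset.prod_congr rfl
    intro r hr
    have h1 := hepos r hr
    have hexp : e r = 1 + min (e r - 1) 1 + (e r - 2) := by omega
    conv_lhs => rw [hexp]
    rw [pow_add, pow_add, pow_one]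
  -- Bound A
  have hA : (∏ r ∈ PF, (r:ℝ)) ≤ Real.exp (y * Real.log 4) :=
    primes_prod_le PF y hy1 (fun r hr => ⟨hprime r hr, (h r hr).1⟩)
  -- Bound B
  have hB : (∏ r ∈ PF, (r:ℝ) ^ (min (e r - 1) 1)) ≤ Real.exp (y ^ (θ/2) * Real.log 4) := by
    have hBeq : (∏ r ∈ PF, (r:ℝ) ^ (min (e r - 1) 1))
        = ∏ r ∈ PF.filter (fun r => 2 ≤ e r), (r:ℝ) := by
      rw [Finset.prod_filter]
      apply Finset.prod_congr rfl
      intro r hr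
      have h1 := hepos r hr
      by_cases hc : 2 ≤ e r
      · rw [if_pos hc]
        have : min (e r - 1) 1 = 1 := by omega
        rw [this, pow_one]
      · rw [if_neg hc]
        have : min (e r - 1) 1 = 0 := by omega
        rw [this, pow_zero]
    rw [hBeq]
    apply primes_prod_le _ _ (Real.one_le_rpow hy1 (by linarith))
    intro r hr
    rw [Finset.mem_filter] at hr
    refine ⟨hprime r hr.1, ?_⟩
    have h2 : (r:ℝ) ^ (2:ℕ) ≤ y ^ θ := by
      calc (r:ℝ) ^ (2:ℕ) ≤ (r:ℝ) ^ (e r) := pow_le_pow_right₀ (hr1 r hr.1) hr.2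
        _ ≤ y ^ θ := (h r hr.1).2
    have := root_le 2 (by norm_num) (by positivity) hy0.le h2
    simpa using this
  -- Bound C
  have hC : (∏ r ∈ PF, (r:ℝ) ^ (e r - 2)) ≤ Real.exp (y ^ ((2:ℝ)/3) * (2 * Real.log y)) := by
    have hCeq : (∏ r ∈ PF, (r:ℝ) ^ (e r - 2))
        = ∏ r ∈ PF.filter (fun r => 3 ≤ e r), (r:ℝ) ^ (e r - 2) := by
      rw [Finset.prod_filter]
      apply Finset.prod_congr rfl
      intro r hr
      by_cases hc : 3 ≤ e r
      · rw [if_pos hc]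
      · rw [if_neg hc]
        have h1 := hepos r hr
        have : e r - 2 = 0 := by omega
        rw [this, pow_zero]
    set m₃ := ⌊y ^ ((2:ℝ)/3)⌋₊ with hm₃
    have hsub : PF.filter (fun r => 3 ≤ e r) ⊆ Finset.Icc 2 m₃ := by
      intro r hr
      rw [Finset.mem_filter] at hr
      rw [Finset.mem_Icc]
      constructor
      · exact (hprime r hr.1).two_le
      · apply Nat.le_floor
        have h3 : (r:ℝ) ^ (3:ℕ) ≤ y ^ θ := by
          calc (r:ℝ) ^ (3:ℕ) ≤ (r:ℝ) ^ (e r) := pow_le_pow_right₀ (hr1 r hr.1) hr.2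
            _ ≤ y ^ θ := (h r hr.1).2
        have := root_le 3 (by norm_num) (by positivity) hy0.le h3
        calc (r:ℝ) ≤ y ^ (θ/3) := by simpa using this
          _ ≤ y ^ ((2:ℝ)/3) := Real.rpow_le_rpow_of_exponent_le hy1 (by linarith)
    have hcard : (PF.filter (fun r => 3 ≤ e r)).card ≤ m₃ := by
      have := Finset.card_le_card hsub
      rw [Nat.card_Icc] at this
      omega
    have hterm : ∀ r ∈ PF.filter (fun r => 3 ≤ e r), (r:ℝ) ^ (e r - 2) ≤ Real.exp (2 * Real.log y) := by
      intro r hr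
      rw [Finset.mem_filter] at hr
      calc (r:ℝ) ^ (e r - 2) ≤ (r:ℝ) ^ (e r) := pow_le_pow_right₀ (hr1 r hr.1) (by omega)
        _ ≤ y ^ θ := (h r hr.1).2
        _ ≤ y ^ (2:ℝ) := Real.rpow_le_rpow_of_exponent_le hy1 hθ2.le
        _ = Real.exp (2 * Real.log y) := by
            rw [Real.rpow_def_of_pos hy0]; ring_nf
    calc (∏ r ∈ PF, (r:ℝ) ^ (e r - 2))
        = ∏ r ∈ PF.filter (fun r => 3 ≤ e r), (r:ℝ) ^ (e r - 2) := hCeq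
      _ ≤ ∏ _r ∈ PF.filter (fun r => 3 ≤ e r), Real.exp (2 * Real.log y) := by
          apply Finset.prod_le_prod
          · intro r hr; positivity
          · exact hterm
      _ = Real.exp (2 * Real.log y) ^ (PF.filter (fun r => 3 ≤ e r)).card :=
          Finset.prod_const _
      _ ≤ Real.exp (2 * Real.log y) ^ m₃ := by
          exact pow_le_pow_right₀ (Real.one_le_exp
            (mul_nonneg (by norm_num) (Real.log_nonneg hy1))) hcard
      _ = Real.exp (m₃ * (2 * Real.log y)) := by
          rw [← Real.exp_nat_mul]
      _ ≤ Real.exp (y ^ ((2:ℝ)/3) * (2 * Real.log y)) := by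
          apply Real.exp_le_exp.mpr
          have h1 : (m₃:ℝ) ≤ y ^ ((2:ℝ)/3) := Nat.floor_le (by positivity)
          have h2 : (0:ℝ) ≤ 2 * Real.log y := mul_nonneg (by norm_num) (Real.log_nonneg hy1)
          nlinarith
  -- combine
  have hApos : (0:ℝ) ≤ ∏ r ∈ PF, (r:ℝ) := Finset.prod_nonneg (fun r _ => by positivity)
  have hBpos : (0:ℝ) ≤ ∏ r ∈ PF, (r:ℝ) ^ (min (e r - 1) 1) :=
    Finset.prod_nonneg (fun r _ => by positivity)
  have hCpos : (0:ℝ) ≤ ∏ r ∈ PF, (r:ℝ) ^ (e r - 2) :=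
    Finset.prod_nonneg (fun r _ => by positivity)
  calc (N:ℝ) = _ := hsplit
    _ ≤ Real.exp (y * Real.log 4) * Real.exp (y ^ (θ/2) * Real.log 4)
        * Real.exp (y ^ ((2:ℝ)/3) * (2 * Real.log y)) := by
        apply mul_le_mul (mul_le_mul hA hB hBpos (Real.exp_nonneg _)) hC hCpos
        positivity
    _ = Real.exp (y * Real.log 4 + y ^ (θ/2) * Real.log 4 + y ^ ((2:ℝ)/3) * (2 * Real.log y)) := by
        rw [← Real.exp_add, ← Real.exp_add]
    _ ≤ Real.exp (2 * θ * y) := Real.exp_le_exp.mpr (real_final y θ hy hθ1 hθ2)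


/-- For sufficiently large `y`: if `L` is squarefree, every prime `q ∣ L` satisfies
`q ≤ y ^ θ`, and every prime factor of `q - 1` is at most `y`, then the exponent of
`(ℤ/Lℤ)ˣ` is at most `exp (2 θ y)`. -/
theorem exponent_bound :
    ∃ Y : ℝ, ∀ y : ℝ, Y ≤ y → ∀ θ : ℝ, 1 < θ → θ < 2 →
      ∀ L : ℕ, 2 ≤ L → Squarefree L →
        (∀ q : ℕ, q.Prime → q ∣ L →
          (q : ℝ) ≤ y ^ θ ∧ ∀ r : ℕ, r.Prime → r ∣ q - 1 → (r : ℝ) ≤ y) →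
        (Monoid.exponent (ZMod L)ˣ : ℝ) ≤ Real.exp (2 * θ * y) := by
  refine ⟨(240:ℝ)^(4:ℕ), fun y hy θ hθ1 hθ2 L hL hsf hq => ?_⟩
  set N := L.primeFactors.lcm (· - 1) with hN
  have hne : ∀ q ∈ L.primeFactors, q - 1 ≠ 0 := by
    intro q hqm
    have := (Nat.prime_of_mem_primeFactors hqm).two_le
    omega
  have hN0 : N ≠ 0 := flcm_ne_zero _ _ hne
  have hdvd : Monoid.exponent (ZMod L)ˣ ∣ N := exp_dvd_lcm L hL hsf
  have hle : Monoid.exponent (ZMod L)ˣ ≤ N := Nat.le_of_dvd (Nat.pos_of_ne_zero hN0) hdvd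
  have hcast : (Monoid.exponent (ZMod L)ˣ : ℝ) ≤ (N:ℝ) := Nat.cast_le.mpr hle
  refine hcast.trans (N_bound y θ hy hθ1 hθ2 N hN0 ?_)
  intro r hr
  have hrp : r.Prime := Nat.prime_of_mem_primeFactors hr
  have hepos : 0 < N.factorization r := by
    have : r ∈ N.factorization.support := by rwa [Nat.support_factorization]
    have := Finsupp.mem_support_iff.mp this
    omega
  obtain ⟨q, hqm, hqd⟩ := flcm_fact _ _ hne r hepos
  have hqp : q.Prime := Nat.prime_of_mem_primeFactors hqm
  obtain ⟨hq1, hq2⟩ := hq q hqp (Nat.dvd_of_mem_primeFactors hqm)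
  constructor
  · apply hq2 r hrp
    exact dvd_trans (dvd_pow_self r hepos.ne') hqd
  · have h1 : r ^ (N.factorization r) ≤ q - 1 := Nat.le_of_dvd (Nat.pos_of_ne_zero (hne q hqm)) hqd
    have h2 : (q:ℝ) - 1 ≤ y ^ θ - 1 := by linarith
    have h3 : ((r ^ (N.factorization r) : ℕ) : ℝ) ≤ ((q - 1 : ℕ) : ℝ) := Nat.cast_le.mpr h1
    have hq2' : (2:ℕ) ≤ q := hqp.two_le
    rw [Nat.cast_sub (by omega)] at h3
    push_cast at h3
    push_cast
    linarith
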